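/- Under the hypotheses of class H(α,θ) on a compact space Ω, the transfer operator L₀ of the zero potential has a spectral gap on Hol_α(Ω) (with norm ‖f‖_∞ + (diam Ω)^α Hol_α(f)) of size (1-θ)/(1+θ) with constant 1: for every f with μ₀(f) = 0, ‖L₀ⁿf‖ ≤ ((2θ)/(1+θ))ⁿ ‖f‖, where μ₀ is the unique L₀*-fixed probability measure. -/

import Mathlib

open Set MeasureTheory

/-- The α-Hölder seminorm of `f`. -/
noncomputable def holSemi {Ω : Type*} [MetricSpace Ω] (α : ℝ) (f : Ω → ℝ) : ℝ :=
  sSup {r : ℝ | ∃ x y : Ω, x ≠ y ∧ r = |f x - f y| / dist x y ^ α}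

/-- The sup norm of `f`. -/
noncomputable def supN {Ω : Type*} (f : Ω → ℝ) : ℝ :=
  sSup (Set.range fun x => |f x|)

/-- The homogeneous Hölder norm `‖f‖_∞ + (diam Ω)^α · Hol_α(f)`. -/
noncomputable def holNorm {Ω : Type*} [MetricSpace Ω] (α : ℝ) (f : Ω → ℝ) : ℝ :=
  supN f + Metric.diam (Set.univ : Set Ω) ^ α * holSemi α f

section Aux
variable {Ω : Type*} [MetricSpace Ω] {α : ℝ} {f : Ω → ℝ}

lemma holSemi_nonneg (hbdd : BddAbove {r : ℝ | ∃ x y : Ω, x ≠ y ∧ r = |f x - f y| / dist x y ^ α}) :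
    0 ≤ holSemi α f := by
  by_cases hS : {r : ℝ | ∃ x y : Ω, x ≠ y ∧ r = |f x - f y| / dist x y ^ α}.Nonempty
  · obtain ⟨r, x, y, hxy, hr⟩ := hS
    have h0 : 0 ≤ r := hr ▸ div_nonneg (abs_nonneg _) (Real.rpow_nonneg dist_nonneg α)
    exact h0.trans (le_csSup hbdd ⟨x, y, hxy, hr⟩)
  · rw [Set.not_nonempty_iff_eq_empty] at hS
    unfold holSemi
    rw [hS, Real.sSup_empty]

lemma hol_le (hα : 0 < α)
    (hbdd : BddAbove {r : ℝ | ∃ x y : Ω, x ≠ y ∧ r = |f x - f y| / dist x y ^ α})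
    (x y : Ω) : |f x - f y| ≤ holSemi α f * dist x y ^ α := by
  by_cases h : x = y
  · subst h
    simp [Real.zero_rpow hα.ne']
  · have hd : (0:ℝ) < dist x y ^ α := Real.rpow_pos_of_pos (dist_pos.2 h) α
    have := le_csSup hbdd (show _ ∈ _ from ⟨x, y, h, rfl⟩)
    rwa [div_le_iff₀ hd] at this

lemma hol_le' (hα : 0 < α) {C : ℝ} (hC : 0 ≤ C)
    (h : ∀ x y : Ω, |f x - f y| ≤ C * dist x y ^ α) : holSemi α f ≤ C := by
  apply Real.sSup_le _ hC
  rintro r ⟨x, y, hxy, rfl⟩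
  have hd : (0:ℝ) < dist x y ^ α := Real.rpow_pos_of_pos (dist_pos.2 hxy) α
  rw [div_le_iff₀ hd]
  exact h x y

lemma hol_bdd {C : ℝ}
    (h : ∀ x y : Ω, |f x - f y| ≤ C * dist x y ^ α) :
    BddAbove {r : ℝ | ∃ x y : Ω, x ≠ y ∧ r = |f x - f y| / dist x y ^ α} := by
  refine ⟨C, ?_⟩
  rintro r ⟨x, y, hxy, rfl⟩
  have hd : (0:ℝ) < dist x y ^ α := Real.rpow_pos_of_pos (dist_pos.2 hxy) α
  rw [div_le_iff₀ hd]
  exact h x y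

lemma supN_le {C : ℝ} (hC : 0 ≤ C) (h : ∀ x, |f x| ≤ C) : supN f ≤ C := by
  apply Real.sSup_le _ hC
  rintro r ⟨x, rfl⟩
  exact h x

lemma bdd_abs [CompactSpace Ω] (hf : Continuous f) :
    BddAbove (Set.range fun x => |f x|) := by
  have := (isCompact_univ.image (continuous_abs.comp hf)).bddAbove
  rwa [Set.image_univ] at this

lemma le_supN (hb : BddAbove (Set.range fun x => |f x|)) (x : Ω) : |f x| ≤ supN f :=
  le_csSup hb ⟨x, rfl⟩

lemma supN_nonneg [Nonempty Ω] (hb : BddAbove (Set.range fun x => |f x|)) : 0 ≤ supN f := by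
  obtain ⟨x⟩ := (inferInstance : Nonempty Ω)
  exact (abs_nonneg _).trans (le_supN hb x)

lemma continuous_of_holder (hα : 0 < α) {C : ℝ}
    (h : ∀ x y : Ω, |f x - f y| ≤ C * dist x y ^ α) : Continuous f := by
  rw [continuous_iff_continuousAt]
  intro x
  rw [ContinuousAt, tendsto_iff_dist_tendsto_zero]
  have h1 : Filter.Tendsto (fun y => dist y x) (nhds x) (nhds 0) := by
    have := (continuous_id.dist (continuous_const (y := x))).tendsto x
    simpa using this
  have h2 : ContinuousAt (fun t : ℝ => t ^ α) 0 :=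
    Real.continuousAt_rpow_const 0 α (Or.inr hα.le)
  have h3 : Filter.Tendsto (fun y => C * dist y x ^ α) (nhds x) (nhds 0) := by
    have := (h2.tendsto.comp h1).const_mul C
    simpa [Real.zero_rpow hα.ne'] using this
  refine squeeze_zero (fun y => dist_nonneg) (fun y => ?_) h3
  rw [Real.dist_eq]
  exact h y x
end Aux

lemma integral_transfer {Ω : Type*} [MetricSpace Ω] [CompactSpace Ω] [MeasurableSpace Ω]
    [BorelSpace Ω] (k : ℕ) (b : Fin k → Ω → Ω) (hb : ∀ j, Measurable (b j))
    (μ₀ : Measure Ω) [IsProbabilityMeasure μ₀]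
    (hfix : (k : ENNReal)⁻¹ • (∑ j, Measure.map (b j) μ₀) = μ₀)
    {g : Ω → ℝ} (hg : Continuous g) :
    ∫ x, (1 / (k : ℝ)) * ∑ j, g (b j x) ∂μ₀ = ∫ x, g x ∂μ₀ := by
  have hint_map : ∀ j, Integrable g (Measure.map (b j) μ₀) := by
    intro j
    haveI : IsProbabilityMeasure (Measure.map (b j) μ₀) :=
      Measure.isProbabilityMeasure_map (hb j).aemeasurable
    have := hg.continuousOn.integrableOn_compact (μ := Measure.map (b j) μ₀) isCompact_univ
    rwa [integrableOn_univ] at this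
  have hint_comp : ∀ j, Integrable (fun x => g (b j x)) μ₀ := fun j =>
    (integrable_map_measure hg.aestronglyMeasurable (hb j).aemeasurable).mp (hint_map j)
  have h1 : ∫ x, (1 / (k : ℝ)) * ∑ j, g (b j x) ∂μ₀
      = (1 / (k : ℝ)) * ∑ j, ∫ x, g (b j x) ∂μ₀ := by
    rw [integral_const_mul, integral_finset_sum _ (fun j _ => hint_comp j)]
  have h2 : ∀ j : Fin k, ∫ x, g (b j x) ∂μ₀ = ∫ y, g y ∂(Measure.map (b j) μ₀) := fun j =>
    (integral_map (hb j).aemeasurable hg.aestronglyMeasurable).symm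
  rw [h1]
  simp_rw [h2]
  rw [← integral_finset_sum_measure (fun j _ => hint_map j)]
  conv_rhs => rw [← hfix]
  rw [integral_smul_measure]
  simp [ENNReal.toReal_inv, smul_eq_mul]

lemma exists_nonpos {Ω : Type*} [MetricSpace Ω] [CompactSpace Ω] [MeasurableSpace Ω]
    [BorelSpace Ω] [Nonempty Ω] (μ : Measure Ω) [IsProbabilityMeasure μ] {g : Ω → ℝ}
    (hg : Continuous g) (h0 : ∫ x, g x ∂μ = 0) : ∃ p, g p ≤ 0 := by
  by_contra h
  push_neg at h
  obtain ⟨x₀, -, hx₀⟩ := isCompact_univ.exists_isMinOn univ_nonempty hg.continuousOn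
  have hint : Integrable g μ := by
    have := hg.continuousOn.integrableOn_compact (μ := μ) isCompact_univ
    rwa [integrableOn_univ] at this
  have hmono : ∫ _x, g x₀ ∂μ ≤ ∫ x, g x ∂μ :=
    integral_mono (integrable_const _) hint (fun x => hx₀ (Set.mem_univ x))
  rw [integral_const] at hmono
  simp [measure_univ] at hmono
  have := h x₀
  linarith

/-- for `T` of class `H(α,θ)` on a compact space, the zero-potential transfer
operator `L₀ f(x) = (1/k)Σ_j f(b_j x)` has spectral gap of size `(1-θ)/(1+θ)` with constant 1
on the Hölder space: if `μ₀(f) = 0`, then `‖L₀ⁿ f‖ ≤ ((2θ)/(1+θ))ⁿ ‖f‖`, where `μ₀` is the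
unique `L₀*`-fixed probability measure. -/
theorem transfer_operator_spectral_gap {Ω : Type*} [MetricSpace Ω] [CompactSpace Ω]
    [MeasurableSpace Ω] [BorelSpace Ω] [Nonempty Ω]
    (α θ : ℝ) (hα : α ∈ Set.Ioc (0:ℝ) 1) (hθ : θ ∈ Set.Ioo (0:ℝ) 1)
    (k : ℕ) (hk : 2 ≤ k) (b : Fin k → Ω → Ω) (hb : ∀ j, Measurable (b j))
    (hcontr : ∀ y z : Ω, ∃ σ : Equiv.Perm (Fin k),
      (1 / (k : ℝ)) * ∑ j, dist (b j y) (b (σ j) z) ^ α ≤ θ * dist y z ^ α)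
    (L : (Ω → ℝ) → (Ω → ℝ))
    (hL : ∀ f x, L f x = (1 / (k : ℝ)) * ∑ j, f (b j x))
    (μ₀ : Measure Ω) [IsProbabilityMeasure μ₀]
    (hfix : (k : ENNReal)⁻¹ • (∑ j, Measure.map (b j) μ₀) = μ₀) :
    ∀ f : Ω → ℝ, Continuous f →
      BddAbove {r : ℝ | ∃ x y : Ω, x ≠ y ∧ r = |f x - f y| / dist x y ^ α} →
      (∫ x, f x ∂μ₀) = 0 →
      ∀ n : ℕ, holNorm α (L^[n] f) ≤ (2 * θ / (1 + θ)) ^ n * holNorm α f := by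
  obtain ⟨hα0, hα1⟩ := hα
  obtain ⟨hθ0, hθ1⟩ := hθ
  intro f hf hbf hintf n
  have hDα : (0:ℝ) ≤ Metric.diam (Set.univ : Set Ω) ^ α :=
    Real.rpow_nonneg Metric.diam_nonneg α
  have hk0 : ((k:ℝ)) ≠ 0 := Nat.cast_ne_zero.2 (by omega)
  have hk1 : (0:ℝ) ≤ 1 / (k:ℝ) := by positivity
  have h1θ : (0:ℝ) < 1 + θ := by linarith
  have hρ0 : (0:ℝ) ≤ 2 * θ / (1 + θ) := by positivity
  -- one-step contraction
  have key : ∀ g : Ω → ℝ, Continuous g →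
      BddAbove {r : ℝ | ∃ x y : Ω, x ≠ y ∧ r = |g x - g y| / dist x y ^ α} →
      (∫ x, g x ∂μ₀) = 0 →
      (Continuous (L g) ∧
        BddAbove {r : ℝ | ∃ x y : Ω, x ≠ y ∧ r = |L g x - L g y| / dist x y ^ α} ∧
        (∫ x, L g x ∂μ₀) = 0) ∧
      holNorm α (L g) ≤ (2 * θ / (1 + θ)) * holNorm α g := by
    intro g hg hbg hig
    have hHg : 0 ≤ holSemi α g := holSemi_nonneg hbg
    have hgptw := hol_le hα0 hbg
    have hcont2 : ∀ y z : Ω, |L g y - L g z| ≤ (θ * holSemi α g) * dist y z ^ α := by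
      intro y z
      obtain ⟨σ, hσ⟩ := hcontr y z
      have e1 : L g y - L g z = (1/(k:ℝ)) * ∑ j, (g (b j y) - g (b (σ j) z)) := by
        rw [hL, hL, ← Equiv.sum_comp σ (fun j => g (b j z)), ← mul_sub,
          ← Finset.sum_sub_distrib]
      rw [e1, abs_mul, abs_of_nonneg hk1]
      calc (1/(k:ℝ)) * |∑ j, (g (b j y) - g (b (σ j) z))|
          ≤ (1/(k:ℝ)) * ∑ j, |g (b j y) - g (b (σ j) z)| :=
            mul_le_mul_of_nonneg_left (Finset.abs_sum_le_sum_abs _ _) hk1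
        _ ≤ (1/(k:ℝ)) * ∑ j, holSemi α g * dist (b j y) (b (σ j) z) ^ α :=
            mul_le_mul_of_nonneg_left (Finset.sum_le_sum (fun j _ => hgptw _ _)) hk1
        _ = holSemi α g * ((1/(k:ℝ)) * ∑ j, dist (b j y) (b (σ j) z) ^ α) := by
            rw [← Finset.mul_sum]; ring
        _ ≤ holSemi α g * (θ * dist y z ^ α) := mul_le_mul_of_nonneg_left hσ hHg
        _ = (θ * holSemi α g) * dist y z ^ α := by ring
    have hθHg : 0 ≤ θ * holSemi α g := mul_nonneg hθ0.le hHg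
    have hLgcont : Continuous (L g) := continuous_of_holder hα0 hcont2
    have hLgbdd : BddAbove {r : ℝ | ∃ x y : Ω, x ≠ y ∧ r = |L g x - L g y| / dist x y ^ α} :=
      hol_bdd hcont2
    have hsemiLg : holSemi α (L g) ≤ θ * holSemi α g := hol_le' hα0 hθHg hcont2
    have hLgint : (∫ x, L g x ∂μ₀) = 0 := by
      have e2 : (∫ x, L g x ∂μ₀) = ∫ x, (1/(k:ℝ)) * ∑ j, g (b j x) ∂μ₀ := by
        simp_rw [hL]
      rw [e2, integral_transfer k b hb μ₀ hfix hg, hig]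
    refine ⟨⟨hLgcont, hLgbdd, hLgint⟩, ?_⟩
    have hLHnn : 0 ≤ holSemi α (L g) := holSemi_nonneg hLgbdd
    obtain ⟨p, hp⟩ := exists_nonpos μ₀ hLgcont hLgint
    obtain ⟨q, hq⟩ : ∃ q, 0 ≤ L g q := by
      obtain ⟨q, hq⟩ := exists_nonpos μ₀ (hLgcont.neg) (by simp only [Pi.neg_apply]; rw [integral_neg, hLgint, neg_zero])
      exact ⟨q, by simpa using hq⟩
    have hdle : ∀ y z : Ω, holSemi α (L g) * dist y z ^ α ≤
        holSemi α (L g) * Metric.diam (Set.univ : Set Ω) ^ α := by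
      intro y z
      refine mul_le_mul_of_nonneg_left ?_ hLHnn
      exact Real.rpow_le_rpow dist_nonneg
        (Metric.dist_le_diam_of_mem isCompact_univ.isBounded (Set.mem_univ y)
          (Set.mem_univ z)) hα0.le
    have hsup' : ∀ x, |L g x| ≤ Metric.diam (Set.univ : Set Ω) ^ α * holSemi α (L g) := by
      intro x
      rcases le_total 0 (L g x) with hx | hx
      · rw [abs_of_nonneg hx]
        calc L g x ≤ L g x - L g p := by linarith
          _ ≤ |L g x - L g p| := le_abs_self _
          _ ≤ holSemi α (L g) * dist x p ^ α := hol_le hα0 hLgbdd x p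
          _ ≤ holSemi α (L g) * Metric.diam (Set.univ : Set Ω) ^ α := hdle x p
          _ = Metric.diam (Set.univ : Set Ω) ^ α * holSemi α (L g) := mul_comm _ _
      · rw [abs_of_nonpos hx]
        calc -L g x ≤ L g q - L g x := by linarith
          _ ≤ |L g q - L g x| := le_abs_self _
          _ ≤ holSemi α (L g) * dist q x ^ α := hol_le hα0 hLgbdd q x
          _ ≤ holSemi α (L g) * Metric.diam (Set.univ : Set Ω) ^ α := hdle q x
          _ = Metric.diam (Set.univ : Set Ω) ^ α * holSemi α (L g) := mul_comm _ _
    have hbLg := bdd_abs hLgcont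
    have hbg' := bdd_abs hg
    have hsupLg1 : supN (L g) ≤ Metric.diam (Set.univ : Set Ω) ^ α * holSemi α (L g) :=
      supN_le (mul_nonneg hDα hLHnn) hsup'
    have hsupLg2 : supN (L g) ≤ supN g := by
      refine supN_le (supN_nonneg hbg') fun x => ?_
      rw [hL, abs_mul, abs_of_nonneg hk1]
      calc (1/(k:ℝ)) * |∑ j, g (b j x)|
          ≤ (1/(k:ℝ)) * ∑ j, |g (b j x)| :=
            mul_le_mul_of_nonneg_left (Finset.abs_sum_le_sum_abs _ _) hk1
        _ ≤ (1/(k:ℝ)) * ∑ _j : Fin k, supN g :=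
            mul_le_mul_of_nonneg_left (Finset.sum_le_sum fun j _ => le_supN hbg' (b j x)) hk1
        _ = supN g := by
            rw [Finset.sum_const, Finset.card_univ, Fintype.card_fin, nsmul_eq_mul]
            field_simp
    have hsemig' : Metric.diam (Set.univ : Set Ω) ^ α * holSemi α (L g) ≤
        θ * (Metric.diam (Set.univ : Set Ω) ^ α * holSemi α g) := by
      rw [show θ * (Metric.diam (Set.univ : Set Ω) ^ α * holSemi α g)
        = Metric.diam (Set.univ : Set Ω) ^ α * (θ * holSemi α g) from by ring]
      exact mul_le_mul_of_nonneg_left hsemiLg hDα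
    have hs0 : 0 ≤ supN g := supN_nonneg hbg'
    have hh0 : 0 ≤ Metric.diam (Set.univ : Set Ω) ^ α * holSemi α g := mul_nonneg hDα hHg
    show supN (L g) + Metric.diam (Set.univ : Set Ω) ^ α * holSemi α (L g)
      ≤ 2 * θ / (1 + θ) * (supN g + Metric.diam (Set.univ : Set Ω) ^ α * holSemi α g)
    rw [div_mul_eq_mul_div, le_div_iff₀ h1θ]
    set s := supN g
    set h := Metric.diam (Set.univ : Set Ω) ^ α * holSemi α g
    set s' := supN (L g)
    set h' := Metric.diam (Set.univ : Set Ω) ^ α * holSemi α (L g)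
    rcases le_total s (θ * h) with hc | hc
    · nlinarith [mul_nonneg (sub_nonneg.2 hθ1.le) (sub_nonneg.2 hc),
        mul_le_mul_of_nonneg_right hsupLg2 h1θ.le,
        mul_le_mul_of_nonneg_right hsemig' h1θ.le]
    · nlinarith [mul_le_mul_of_nonneg_left hc hθ0.le,
        mul_le_mul_of_nonneg_right hsupLg1 h1θ.le,
        mul_le_mul_of_nonneg_right hsemig' h1θ.le]
  have main : ∀ m : ℕ, (Continuous (L^[m] f) ∧
      BddAbove {r : ℝ | ∃ x y : Ω, x ≠ y ∧ r = |L^[m] f x - L^[m] f y| / dist x y ^ α} ∧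
      (∫ x, L^[m] f x ∂μ₀) = 0) ∧
      holNorm α (L^[m] f) ≤ (2 * θ / (1 + θ)) ^ m * holNorm α f := by
    intro m
    induction m with
    | zero =>
      simp only [Function.iterate_zero, id_eq, pow_zero, one_mul]
      exact ⟨⟨hf, hbf, hintf⟩, le_refl _⟩
    | succ m ih =>
      obtain ⟨⟨h1, h2, h3⟩, h4⟩ := ih
      obtain ⟨hP, hstep⟩ := key _ h1 h2 h3
      rw [Function.iterate_succ_apply']
      refine ⟨hP, ?_⟩
      calc holNorm α (L (L^[m] f)) ≤ 2 * θ / (1 + θ) * holNorm α (L^[m] f) := hstep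
        _ ≤ 2 * θ / (1 + θ) * ((2 * θ / (1 + θ)) ^ m * holNorm α f) :=
            mul_le_mul_of_nonneg_left h4 hρ0
        _ = (2 * θ / (1 + θ)) ^ (m + 1) * holNorm α f := by ring
  exact (main n).2
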